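/- Let (Ω, F, P) be a probability space with a filtration (F_t)_{t∈ℕ}, and let Q_1(t), …, Q_N(t) be nonnegative real-valued stochastic processes adapted to (F_t) with E[Q_n(t)²] < ∞ for all n and t. Define the Lyapunov function L(t) = (1/2) Σ_{n=1}^N Q_n(t)² and the Lyapunov drift Δ(t) = E[L(t+1) − L(t) | F_t]. If there exist constants B ≥ 0 and ε ≥ 0 such that Δ(t) ≤ B − ε Σ_{n=1}^N Q_n(t) almost surely for every t ∈ ℕ, then every queue is mean rate stable, i.e., lim_{τ→∞} E[Q_n(τ)]/τ = 0 for each n. -/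

import Mathlib

open MeasureTheory Filter

/-- Lyapunov drift condition with ε ≥ 0 implies every queue is mean rate stable. -/
theorem lyapunov_drift_mean_rate_stable
    {Ω : Type*} {m0 : MeasurableSpace Ω} {μ : Measure Ω} [IsProbabilityMeasure μ]
    (ℱ : Filtration ℕ m0) (N : ℕ) (Q : Fin N → ℕ → Ω → ℝ)
    (hadapt : ∀ n, StronglyAdapted ℱ (fun t => Q n t))
    (hnonneg : ∀ n t ω, 0 ≤ Q n t ω)
    (hL2 : ∀ n t, MemLp (Q n t) 2 μ)
    (L : ℕ → Ω → ℝ)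
    (hL : ∀ t ω, L t ω = (1 / 2) * ∑ n, (Q n t ω) ^ 2)
    (B ε : ℝ) (hB : 0 ≤ B) (hε : 0 ≤ ε)
    (hdrift : ∀ t : ℕ,
      ∀ᵐ ω ∂μ, (μ[fun ω' => L (t + 1) ω' - L t ω' | ℱ t]) ω
        ≤ B - ε * ∑ n, Q n t ω) :
    ∀ n, Tendsto (fun τ : ℕ => (∫ ω, Q n τ ω ∂μ) / τ) atTop (nhds 0) := by
  -- integrability facts
  have hQint : ∀ (n : Fin N) t, Integrable (Q n t) μ := fun n t =>
    (hL2 n t).integrable one_le_two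
  have hQ2int : ∀ (n : Fin N) t, Integrable (fun ω => Q n t ω ^ 2) μ := fun n t =>
    (hL2 n t).integrable_sq
  have hLint : ∀ t, Integrable (L t) μ := by
    intro t
    have : Integrable (fun ω => (1/2 : ℝ) * ∑ n, Q n t ω ^ 2) μ := by
      exact (integrable_finset_sum _ fun n _ => hQ2int n t).const_mul _
    exact this.congr (Filter.Eventually.of_forall fun ω => (hL t ω).symm)
  -- E[L (t+1)] ≤ E[L t] + B
  have hstep : ∀ t, ∫ ω, L (t+1) ω ∂μ ≤ ∫ ω, L t ω ∂μ + B := by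
    intro t
    have hdiffint : Integrable (fun ω => L (t+1) ω - L t ω) μ := (hLint (t+1)).sub (hLint t)
    have h1 : ∫ ω, (μ[fun ω' => L (t + 1) ω' - L t ω' | ℱ t]) ω ∂μ
        = ∫ ω, (L (t+1) ω - L t ω) ∂μ := integral_condExp (ℱ.le t)
    have h2 : ∫ ω, (μ[fun ω' => L (t + 1) ω' - L t ω' | ℱ t]) ω ∂μ
        ≤ ∫ ω, (B - ε * ∑ n, Q n t ω) ∂μ := by
      refine integral_mono_ae integrable_condExp ?_ (hdrift t)
      exact (integrable_const B).sub (((integrable_finset_sum _ fun n _ => hQint n t)).const_mul ε)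
    have h3 : ∫ ω, (B - ε * ∑ n, Q n t ω) ∂μ ≤ B := by
      rw [integral_sub (integrable_const B)
        (((integrable_finset_sum _ fun n _ => hQint n t)).const_mul ε)]
      simp only [integral_const, probReal_univ, ENNReal.toReal_one, smul_eq_mul, one_mul]
      have : 0 ≤ ∫ ω, ε * ∑ n, Q n t ω ∂μ := by
        refine integral_nonneg fun ω => mul_nonneg hε (Finset.sum_nonneg fun n _ => hnonneg n t ω)
      linarith
    have h4 : ∫ ω, (L (t+1) ω - L t ω) ∂μ
        = ∫ ω, L (t+1) ω ∂μ - ∫ ω, L t ω ∂μ := integral_sub (hLint (t+1)) (hLint t)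
    linarith [h1 ▸ h2, h4]
  -- E[L t] ≤ E[L 0] + B * t
  have hLbound : ∀ t : ℕ, ∫ ω, L t ω ∂μ ≤ ∫ ω, L 0 ω ∂μ + B * t := by
    intro t
    induction t with
    | zero => simp
    | succ t ih =>
      have := hstep t
      push_cast
      linarith
  intro n
  -- E[Q n τ] ≤ sqrt (2 * (E[L 0] + B τ))
  set C : ℝ := 2 * ∫ ω, L 0 ω ∂μ with hC
  have hC0 : 0 ≤ C := by
    refine mul_nonneg (by norm_num) (integral_nonneg fun ω => ?_)
    rw [hL]
    positivity
  have hEQ : ∀ τ : ℕ, ∫ ω, Q n τ ω ∂μ ≤ Real.sqrt (C + 2 * B * τ) := by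
    intro τ
    have hsq : (∫ ω, Q n τ ω ∂μ) ^ 2 ≤ ∫ ω, Q n τ ω ^ 2 ∂μ := by
      have := ProbabilityTheory.variance_nonneg (Q n τ) μ
      have hv := ProbabilityTheory.variance_eq_sub (hL2 n τ)
      simp only [Pi.pow_apply] at hv
      rw [hv] at this
      linarith
    have hsum : ∫ ω, Q n τ ω ^ 2 ∂μ ≤ C + 2 * B * τ := by
      have h1 : ∫ ω, Q n τ ω ^ 2 ∂μ ≤ ∫ ω, ∑ m, Q m τ ω ^ 2 ∂μ := by
        refine integral_mono (hQ2int n τ) (integrable_finset_sum _ fun m _ => hQ2int m τ) ?_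
        intro ω
        exact Finset.single_le_sum (f := fun m => Q m τ ω ^ 2) (fun m _ => sq_nonneg _) (Finset.mem_univ n)
      have h2 : ∫ ω, ∑ m, Q m τ ω ^ 2 ∂μ = 2 * ∫ ω, L τ ω ∂μ := by
        rw [show (fun ω => ∑ m, Q m τ ω ^ 2) = fun ω => 2 * L τ ω by
          funext ω; rw [hL]; ring]
        exact integral_const_mul 2 _
      have := hLbound τ
      rw [h2] at h1
      rw [hC]
      linarith
    calc ∫ ω, Q n τ ω ∂μ ≤ Real.sqrt ((∫ ω, Q n τ ω ∂μ) ^ 2) := by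
          rw [Real.sqrt_sq (integral_nonneg fun ω => hnonneg n τ ω)]
      _ ≤ Real.sqrt (C + 2 * B * τ) :=
          Real.sqrt_le_sqrt (le_trans hsq hsum)
  -- squeeze
  have hub : Tendsto (fun τ : ℕ => Real.sqrt (C + 2 * B * τ) / τ) atTop (nhds 0) := by
    have heq : ∀ᶠ τ : ℕ in atTop, Real.sqrt (C + 2 * B * τ) / τ
        = Real.sqrt (C / τ ^ 2 + 2 * B / τ) := by
      filter_upwards [eventually_gt_atTop 0] with τ hτ
      have hτ0 : (0:ℝ) < τ := by exact_mod_cast hτ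
      rw [show C / (τ:ℝ) ^ 2 + 2 * B / τ = (C + 2 * B * τ) / (τ:ℝ) ^ 2 by field_simp,
        Real.sqrt_div' _ (by positivity), Real.sqrt_sq hτ0.le]
    rw [tendsto_congr' heq]
    have hτpow : Tendsto (fun τ : ℕ => (τ:ℝ) ^ 2) atTop atTop :=
      (tendsto_pow_atTop two_ne_zero).comp tendsto_natCast_atTop_atTop
    have h1 : Tendsto (fun τ : ℕ => C / (τ:ℝ) ^ 2 + 2 * B / τ) atTop (nhds (0 + 0)) :=
      (Tendsto.div_atTop tendsto_const_nhds hτpow).add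
        (Tendsto.div_atTop tendsto_const_nhds tendsto_natCast_atTop_atTop)
    rw [add_zero] at h1
    have := (Real.continuous_sqrt.tendsto 0).comp h1
    simpa [Function.comp_def] using this
  refine squeeze_zero' ?_ ?_ hub
  · exact Filter.Eventually.of_forall fun τ =>
      div_nonneg (integral_nonneg fun ω => hnonneg n τ ω) (Nat.cast_nonneg τ)
  · filter_upwards [eventually_gt_atTop 0] with τ hτ
    have hτ0 : (0:ℝ) < τ := by exact_mod_cast hτ
    exact div_le_div_of_nonneg_right (hEQ τ) hτ0.le
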